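/- arXiv:1203.3275 — 4 statements merged into one kernel-verified Lean document; each statement's English description precedes it below -/
import Mathlib

section
/- For all complex s with Re(s) > 1, the Dirichlet series ∑_{n=1}^∞ Λ(n)²/n^s converges and equals ∑_n (log n)·Λ(n)/n^s − ∑_p (log p)²/(p^s − 1)², i.e. (ζ'/ζ)'(s) − B(s) where B(s) = ∑_p (log p)²/(p^s − 1)². -/
open ArithmeticFunction
open LSeries.notation

private lemma natCast_pow_cpow_aux {p : ℕ} (hp : p ≠ 0) (k : ℕ) (s : ℂ) :
    ((p ^ k : ℕ) : ℂ) ^ s = ((p : ℂ) ^ s) ^ k := by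
  rw [Nat.cast_pow, ← Complex.natCast_cpow_natCast_mul]
  induction k with
  | zero => simp
  | succ n ih =>
    have hp' : (p : ℂ) ≠ 0 := Nat.cast_ne_zero.mpr hp
    rw [pow_succ, ← ih, ← Complex.cpow_add _ _ hp']
    push_cast
    ring_nf

/-- For `Re s > 1`, the Dirichlet series `∑ Λ(n)²/n^s` converges and equals
`∑_n (log n)·Λ(n)/n^s − ∑_p (log p)²/(p^s − 1)²`, i.e. `(ζ'/ζ)'(s) − B(s)`. -/
theorem vonMangoldt_sq_dirichlet_series (s : ℂ) (hs : 1 < s.re) :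
    HasSum (fun n : ℕ => ((Λ n : ℝ) ^ 2 : ℝ) / (n : ℂ) ^ s)
      ((∑' n : ℕ, ((Real.log n * Λ n : ℝ) : ℂ) / (n : ℂ) ^ s) -
        ∑' p : Nat.Primes, ((Real.log p : ℝ) : ℂ) ^ 2 / ((p : ℂ) ^ s - 1) ^ 2) := by
  set a : ℕ → ℂ := fun n => ((Real.log n * Λ n : ℝ) : ℂ) / (n : ℂ) ^ s with ha_def
  set b : ℕ → ℂ := fun n => (((Λ n : ℝ) ^ 2 : ℝ) : ℂ) / (n : ℂ) ^ s with hb_def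
  -- Summability of `a`
  have habs : LSeries.abscissaOfAbsConv ↗Λ ≤ 1 := by
    refine LSeries.abscissaOfAbsConv_le_of_forall_lt_LSeriesSummable fun y hy => ?_
    exact ArithmeticFunction.LSeriesSummable_vonMangoldt (by simpa using hy)
  have hasum : LSeriesSummable (LSeries.logMul ↗Λ) s :=
    LSeriesSummable_logMul_of_lt_re (lt_of_le_of_lt habs (by exact_mod_cast hs))
  have haeq : a = LSeries.term (LSeries.logMul ↗Λ) s := by
    funext n
    rcases eq_or_ne n 0 with rfl | hn
    · simp [ha_def, LSeries.term_zero]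
    · rw [LSeries.term_of_ne_zero hn]
      simp only [ha_def, LSeries.logMul]
      push_cast
      ring
  have ha : Summable a := haeq ▸ hasum
  -- Summability of `b` by comparison with `a`
  have hb : Summable b := by
    refine Summable.of_norm_bounded (summable_norm_iff.mpr ha) fun n => ?_
    rcases eq_or_ne n 0 with rfl | hn
    · simp [ha_def, hb_def]
    have hden : 0 < ‖(n : ℂ) ^ s‖ :=
      Complex.norm_natCast_cpow_pos_of_pos (Nat.pos_of_ne_zero hn) s
    simp only [ha_def, hb_def, norm_div, Complex.norm_real]
    gcongr
    calc |(Λ n : ℝ) ^ 2| = Λ n * Λ n := by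
          rw [abs_of_nonneg (sq_nonneg _), sq]
      _ ≤ Real.log n * Λ n :=
          mul_le_mul_of_nonneg_right vonMangoldt_le_log vonMangoldt_nonneg
      _ ≤ |Real.log n * Λ n| := le_abs_self _
  -- the difference function, supported on prime powers
  set g : ℕ → ℂ := fun n => a n - b n with hg_def
  have hg : Summable g := ha.sub hb
  set F : Nat.Primes × ℕ → ℕ := fun pk => (pk.1 : ℕ) ^ (pk.2 + 1) with hF_def
  have hFinj : Function.Injective F := by
    have : F = fun pk => ((Nat.Primes.prodNatEquiv pk : {n : ℕ // IsPrimePow n}) : ℕ) := by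
      funext pk
      obtain ⟨p, k⟩ := pk
      rfl
    rw [this]
    exact Subtype.coe_injective.comp Nat.Primes.prodNatEquiv.injective
  have hg0 : ∀ n ∉ Set.range F, g n = 0 := by
    intro n hn
    by_contra h
    have hΛ : Λ n ≠ 0 := by
      intro h0
      apply h
      simp [hg_def, ha_def, hb_def, h0]
    have hpp : IsPrimePow n := vonMangoldt_ne_zero_iff.mp hΛ
    apply hn
    refine ⟨Nat.Primes.prodNatEquiv.symm ⟨n, hpp⟩, ?_⟩
    have := congrArg Subtype.val (Nat.Primes.prodNatEquiv.apply_symm_apply ⟨n, hpp⟩)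
    exact this
  -- value of `g` on prime powers
  have hgF : ∀ (p : Nat.Primes) (k : ℕ),
      g (F (p, k)) = ((Real.log (p : ℕ) : ℝ) : ℂ) ^ 2 *
        ((k : ℂ) * ((((p : ℕ) : ℂ) ^ s)⁻¹) ^ (k + 1)) := by
    intro p k
    have hp : (p : ℕ).Prime := p.prop
    have hΛp : Λ ((p : ℕ) ^ (k + 1)) = Real.log (p : ℕ) := by
      rw [vonMangoldt_apply_pow (Nat.succ_ne_zero k), vonMangoldt_apply_prime hp]
    have hlog : Real.log (((p : ℕ) ^ (k + 1) : ℕ) : ℝ) = (k + 1) * Real.log (p : ℕ) := by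
      push_cast
      rw [Real.log_pow]
      push_cast
      ring
    have hden : (((p : ℕ) ^ (k + 1) : ℕ) : ℂ) ^ s = (((p : ℕ) : ℂ) ^ s) ^ (k + 1) :=
      natCast_pow_cpow_aux hp.pos.ne' (k + 1) s
    have hPne : (((p : ℕ) : ℂ) ^ s) ≠ 0 := by
      intro h0
      have := Complex.norm_natCast_cpow_pos_of_pos hp.pos s
      rw [h0] at this
      simp at this
    simp only [hg_def, ha_def, hb_def, hF_def]
    rw [hden, hΛp, hlog]
    push_cast
    field_simp
    rw [div_pow, one_pow, mul_one_div, mul_div_assoc, div_self (pow_ne_zero _ hPne)]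
    ring
  -- the fiberwise sums
  have hfiber : ∀ p : Nat.Primes,
      HasSum (fun k : ℕ => g (F (p, k)))
        (((Real.log (p : ℕ) : ℝ) : ℂ) ^ 2 / ((((p : ℕ) : ℂ)) ^ s - 1) ^ 2) := by
    intro p
    have hp : (p : ℕ).Prime := p.prop
    set P : ℂ := ((p : ℕ) : ℂ) ^ s with hP_def
    have hPnorm : 1 < ‖P‖ := by
      rw [hP_def, Complex.norm_natCast_cpow_of_pos hp.pos]
      calc (1 : ℝ) < 2 ^ s.re := by
            refine (Real.one_lt_rpow_iff_of_pos (by norm_num)).mpr ?_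
            exact Or.inl ⟨by norm_num, by linarith⟩
        _ ≤ ((p : ℕ) : ℝ) ^ s.re :=
            Real.rpow_le_rpow (by norm_num) (by exact_mod_cast hp.two_le) (by linarith)
    have hPne : P ≠ 0 := by
      intro h0
      rw [h0, norm_zero] at hPnorm
      linarith
    have hP1 : P - 1 ≠ 0 := by
      intro h0
      have hP1' : P = 1 := by linear_combination h0
      rw [hP1'] at hPnorm
      norm_num at hPnorm
    have hr : ‖P⁻¹‖ < 1 := by
      rw [norm_inv]
      exact inv_lt_one_of_one_lt₀ hPnorm
    have key := (hasSum_coe_mul_geometric_of_norm_lt_one hr).mul_left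
      (((Real.log (p : ℕ) : ℝ) : ℂ) ^ 2 * P⁻¹)
    have h1 : (1 - P⁻¹) = (P - 1) * P⁻¹ := by field_simp
    have hval : ((Real.log (p : ℕ) : ℝ) : ℂ) ^ 2 * P⁻¹ * (P⁻¹ / (1 - P⁻¹) ^ 2)
        = ((Real.log (p : ℕ) : ℝ) : ℂ) ^ 2 / (P - 1) ^ 2 := by
      rw [h1]
      field_simp
    have hfun : (fun k : ℕ => g (F (p, k)))
        = fun k : ℕ => ((Real.log (p : ℕ) : ℝ) : ℂ) ^ 2 * P⁻¹ * ((k : ℂ) * P⁻¹ ^ k) := by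
      funext k
      rw [hgF p k]
      ring
    rw [hfun, ← hval]
    exact key
  -- assemble the prime-power sum
  have hgFsummable : Summable (g ∘ F) := hg.comp_injective hFinj
  have hgFhas : HasSum (g ∘ F) (∑' pk : Nat.Primes × ℕ, g (F pk)) := hgFsummable.hasSum
  have hS : HasSum (fun p : Nat.Primes =>
      ((Real.log (p : ℕ) : ℝ) : ℂ) ^ 2 / ((((p : ℕ) : ℂ)) ^ s - 1) ^ 2)
      (∑' pk : Nat.Primes × ℕ, g (F pk)) :=
    hgFhas.prod_fiberwise hfiber
  have hT2 : (∑' p : Nat.Primes, ((Real.log p : ℝ) : ℂ) ^ 2 / ((p : ℂ) ^ s - 1) ^ 2) =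
      ∑' pk : Nat.Primes × ℕ, g (F pk) := hS.tsum_eq
  have hGsum : HasSum g
      (∑' p : Nat.Primes, ((Real.log p : ℝ) : ℂ) ^ 2 / ((p : ℂ) ^ s - 1) ^ 2) := by
    rw [hT2]
    exact (hFinj.hasSum_iff hg0).mp hgFhas
  have final := ha.hasSum.sub hGsum
  convert final using 2 with n
  · rfl
  simp [hg_def]
end

section
/- For all complex s with Re(s) > 1, ∑_{n=1}^∞ Λ(n)²/n^s = ∑_{k=1}^∞ c_k · (ζ'/ζ)'(ks), where c_k = ∑_{d|k} μ(d)·d, and the series over k converges absolutely. -/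
open ArithmeticFunction
open scoped ArithmeticFunction.Moebius ArithmeticFunction.zeta

open ArithmeticFunction LSeries Complex Finset
open scoped LSeries.notation

/-- `Fm = μ · id` as an integer arithmetic function. -/
lemma VM_Idz_mul_Fm : ((ArithmeticFunction.id : ArithmeticFunction ℕ) : ArithmeticFunction ℤ) *
    ((μ).pmul ((ArithmeticFunction.id : ArithmeticFunction ℕ) : ArithmeticFunction ℤ)) = 1 := by
  rw [ArithmeticFunction.IsMultiplicative.eq_iff_eq_on_prime_powers _
    (isMultiplicative_id.natCast.mul (isMultiplicative_moebius.pmul isMultiplicative_id.natCast))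
    _ isMultiplicative_one]
  intro p i hp
  rw [mul_apply,
    Nat.sum_divisorsAntidiagonal
      (fun a b => (((ArithmeticFunction.id : ArithmeticFunction ℕ) : ArithmeticFunction ℤ) a) *
        ((μ).pmul ((ArithmeticFunction.id : ArithmeticFunction ℕ) : ArithmeticFunction ℤ)) b),
    Nat.sum_divisors_prime_pow hp]
  simp only [natCoe_apply, id_apply, pmul_apply, one_apply]
  rcases Nat.eq_zero_or_pos i with rfl | hi
  · simp
  · rw [if_neg (Nat.one_lt_pow hi.ne' hp.one_lt).ne']
    obtain ⟨j, rfl⟩ : ∃ j, i = j + 1 := ⟨i - 1, (Nat.succ_pred_eq_of_pos hi).symm⟩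
    rw [sum_range_succ, sum_range_succ, Finset.sum_eq_zero (fun x hx => ?_)]
    · have h1 : (p:ℕ) ^ (j + 1) / p ^ j = p := by
        rw [Nat.pow_div (by omega) hp.pos]; simp
      have h2 : (p:ℕ) ^ (j + 1) / p ^ (j + 1) = 1 := Nat.div_self (Nat.pow_pos hp.pos)
      rw [h1, h2]
      have hμp : μ p = -1 := moebius_apply_prime hp
      simp only [moebius_apply_one, hμp]
      push_cast
      ring
    · have hxj : x < j := mem_range.mp hx
      have hdiv : (p:ℕ) ^ (j + 1) / p ^ x = p ^ (j + 1 - x) := Nat.pow_div (by omega) hp.pos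
      rw [hdiv, moebius_apply_prime_pow hp (by omega), if_neg (by omega)]
      ring

lemma VM_Hsum (c : ℕ → ℤ) (hc : ∀ k : ℕ, c k = ∑ d ∈ k.divisors, μ d * (d : ℤ)) {j : ℕ}
    (hj : j ≠ 0) : ∑ d ∈ j.divisors, ((j / d : ℕ) : ℤ) * c d = 1 := by
  have hcF : ∀ d : ℕ, c d =
      (((μ).pmul ((ArithmeticFunction.id : ArithmeticFunction ℕ) : ArithmeticFunction ℤ)) *
        (ζ : ArithmeticFunction ℤ)) d := by
    intro d
    rw [hc, coe_mul_zeta_apply]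
    exact Finset.sum_congr rfl fun e _ => by simp [pmul_apply, natCoe_apply]
  have hA := Nat.sum_divisorsAntidiagonal'
      (fun a b => (((ArithmeticFunction.id : ArithmeticFunction ℕ) : ArithmeticFunction ℤ) a) *
        ((((μ).pmul ((ArithmeticFunction.id : ArithmeticFunction ℕ) : ArithmeticFunction ℤ)) *
        (ζ : ArithmeticFunction ℤ)) b)) (n := j)
  have key : (((ArithmeticFunction.id : ArithmeticFunction ℕ) : ArithmeticFunction ℤ) *
      (((μ).pmul ((ArithmeticFunction.id : ArithmeticFunction ℕ) : ArithmeticFunction ℤ)) *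
      (ζ : ArithmeticFunction ℤ))) j = 1 := by
    rw [← mul_assoc, VM_Idz_mul_Fm, one_mul]
    simp [natCoe_apply, hj]
  rw [mul_apply, hA] at key
  rw [← key]
  exact Finset.sum_congr rfl fun d hd => by simp [hcF, natCoe_apply]

open scoped Classical in
/-- The reindexed coefficient function: `Bf k m = Λ(m) log(m) / k` if `m` is a `k`-th power. -/
noncomputable def Bf (k m : ℕ) : ℂ :=
  if ∃ n : ℕ, n ^ k = m then ((Λ m * Real.log m : ℝ) : ℂ) / k else 0

lemma VM_abscissa : abscissaOfAbsConv ↗Λ ≤ 1 :=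
  abscissaOfAbsConv_le_of_forall_lt_LSeriesSummable fun y hy =>
    LSeriesSummable_vonMangoldt (by simpa using hy)

lemma VM_term_comp {k : ℕ} (hk : k ≠ 0) (s : ℂ) (n : ℕ) :
    LSeries.term (Bf k) s (n ^ k) = LSeries.term (logMul ↗Λ) ((k : ℂ) * s) n := by
  rcases eq_or_ne n 0 with rfl | hn
  · rw [zero_pow hk]
    simp [LSeries.term]
  · have hnk : n ^ k ≠ 0 := pow_ne_zero _ hn
    have hkC : (k : ℂ) ≠ 0 := Nat.cast_ne_zero.mpr hk
    rw [LSeries.term_of_ne_zero hnk, LSeries.term_of_ne_zero hn, Bf, if_pos ⟨n, rfl⟩,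
      vonMangoldt_apply_pow hk]
    have hden : ((n ^ k : ℕ) : ℂ) ^ s = (n : ℂ) ^ ((k : ℂ) * s) := by
      push_cast
      rw [natCast_cpow_natCast_mul]
    have hlog : Real.log ((n : ℕ) ^ k : ℕ) = k * Real.log n := by
      push_cast
      simp [Real.log_pow]
    simp only [logMul]
    rw [hden, hlog, ← Complex.natCast_log]
    push_cast
    have hnum : (Λ n : ℂ) * ((k : ℂ) * Complex.log n) / (k : ℂ) =
        Complex.log n * (Λ n : ℂ) := by
      field_simp
    rw [hnum]

lemma VM_re_mul {k : ℕ} (hk : k ≠ 0) {s : ℂ} (hs : 1 < s.re) : 1 < ((k : ℂ) * s).re := by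
  have h : ((k : ℂ) * s).re = k * s.re := by
    simp [Complex.mul_re]
  rw [h]
  have hk1 : (1:ℝ) ≤ k := by exact_mod_cast Nat.one_le_iff_ne_zero.mpr hk
  nlinarith

lemma VM_abs_lt {k : ℕ} (hk : k ≠ 0) {s : ℂ} (hs : 1 < s.re) :
    abscissaOfAbsConv ↗Λ < (((k : ℂ) * s).re : EReal) :=
  lt_of_le_of_lt VM_abscissa (by exact_mod_cast VM_re_mul hk hs)

lemma VM_summable_logMul {k : ℕ} (hk : k ≠ 0) {s : ℂ} (hs : 1 < s.re) :
    LSeriesSummable (logMul ↗Λ) ((k : ℂ) * s) :=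
  LSeriesSummable_logMul_of_lt_re (VM_abs_lt hk hs)

lemma VM_vanish (k : ℕ) (s : ℂ) {m : ℕ} (hm : m ∉ Set.range (fun n : ℕ => n ^ k)) :
    LSeries.term (Bf k) s m = 0 := by
  have hB : Bf k m = 0 := by
    rw [Bf, if_neg]
    rintro ⟨n, rfl⟩
    exact hm ⟨n, rfl⟩
  rw [LSeries.term_def, hB]
  simp

lemma VM_summable_term_B {k : ℕ} (hk : k ≠ 0) {s : ℂ} (hs : 1 < s.re) :
    Summable (LSeries.term (Bf k) s) := by
  refine ((Nat.pow_left_injective hk).summable_iff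
    (f := LSeries.term (Bf k) s) (fun m hm => VM_vanish k s hm)).mp ?_
  exact (VM_summable_logMul hk hs).congr fun n => (VM_term_comp hk s n).symm

lemma VM_tsum_term_B {k : ℕ} (hk : k ≠ 0) (s : ℂ) :
    ∑' m : ℕ, LSeries.term (Bf k) s m = LSeries (logMul ↗Λ) ((k : ℂ) * s) := by
  rw [LSeries, ← (Nat.pow_left_injective hk).tsum_eq
    (Function.support_subset_iff'.mpr (fun m hm => VM_vanish k s hm))]
  exact tsum_congr fun n => VM_term_comp hk s n

lemma VM_tsum_norm_term_B {k : ℕ} (hk : k ≠ 0) (s : ℂ) :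
    ∑' m : ℕ, ‖LSeries.term (Bf k) s m‖ =
      ∑' n : ℕ, ‖LSeries.term (logMul ↗Λ) ((k : ℂ) * s) n‖ := by
  rw [← (Nat.pow_left_injective hk).tsum_eq (f := fun m => ‖LSeries.term (Bf k) s m‖)
    (Function.support_subset_iff'.mpr (fun m hm => by rw [VM_vanish k s hm, norm_zero]))]
  exact tsum_congr fun n => by rw [VM_term_comp hk s n]

lemma VM_term_bound {s : ℂ} (hs : 1 < s.re) (k n : ℕ) :
    ‖LSeries.term (logMul ↗Λ) (((k + 1 : ℕ) : ℂ) * s) n‖ ≤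
      ((2:ℝ) ^ (-s.re)) ^ k * ‖LSeries.term (logMul ↗Λ) s n‖ := by
  have hσ0 : (0:ℝ) < s.re := lt_trans one_pos hs
  have hrk : (0:ℝ) ≤ ((2:ℝ) ^ (-s.re)) ^ k := by positivity
  rcases eq_or_ne n 0 with rfl | hn
  · simp [LSeries.norm_term_eq]
  rcases eq_or_ne n 1 with rfl | hn1
  · have hf1 : logMul ↗Λ 1 = 0 := by
      simp [logMul, ArithmeticFunction.vonMangoldt_apply_one]
    rw [LSeries.norm_term_eq, LSeries.norm_term_eq, if_neg one_ne_zero, if_neg one_ne_zero, hf1]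
    simp
  · have hn2 : (2:ℝ) ≤ n := by
      have : 2 ≤ n := by omega
      exact_mod_cast this
    have hnpos : (0:ℝ) < n := by linarith
    rw [LSeries.norm_term_eq, LSeries.norm_term_eq, if_neg hn, if_neg hn]
    have hre : (((k + 1 : ℕ) : ℂ) * s).re = (k + 1) * s.re := by
      simp [Complex.mul_re]
    rw [hre]
    have h1 : (n:ℝ) ^ (((k:ℝ) + 1) * s.re) = (n:ℝ) ^ s.re * ((n:ℝ) ^ s.re) ^ k := by
      rw [add_mul, one_mul, Real.rpow_add hnpos, mul_comm ((n:ℝ) ^ (↑k * s.re)) _,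
        mul_comm (k:ℝ) s.re, Real.rpow_mul hnpos.le, Real.rpow_natCast]
    have h2 : ((2:ℝ) ^ s.re) ^ k ≤ ((n:ℝ) ^ s.re) ^ k :=
      pow_le_pow_left₀ (by positivity) (Real.rpow_le_rpow (by norm_num) hn2 hσ0.le) k
    have h3 : (0:ℝ) < (n:ℝ) ^ s.re * ((2:ℝ) ^ s.re) ^ k := by positivity
    calc ‖logMul ↗Λ n‖ / (n:ℝ) ^ (((k:ℝ) + 1) * s.re)
        ≤ ‖logMul ↗Λ n‖ / ((n:ℝ) ^ s.re * ((2:ℝ) ^ s.re) ^ k) := by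
          rw [h1]
          exact div_le_div_of_nonneg_left (norm_nonneg _) h3
            (mul_le_mul_of_nonneg_left h2 (by positivity))
      _ = ((2:ℝ) ^ (-s.re)) ^ k * (‖logMul ↗Λ n‖ / (n:ℝ) ^ s.re) := by
          rw [Real.rpow_neg (by norm_num), inv_pow, ← div_div, div_eq_mul_inv, mul_comm]

lemma VM_deriv_eq {w : ℂ} (hw : 1 < w.re) :
    deriv (fun z : ℂ => deriv riemannZeta z / riemannZeta z) w = LSeries (logMul ↗Λ) w := by
  have hopen : IsOpen {z : ℂ | 1 < z.re} := isOpen_lt continuous_const Complex.continuous_re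
  have hev : (fun z : ℂ => deriv riemannZeta z / riemannZeta z) =ᶠ[nhds w]
      (fun z : ℂ => - LSeries ↗Λ z) := by
    filter_upwards [hopen.mem_nhds hw] with z hz
    rw [LSeries_vonMangoldt_eq_deriv_riemannZeta_div hz]
    ring
  rw [hev.deriv_eq]
  have habs : abscissaOfAbsConv ↗Λ < (w.re : EReal) :=
    lt_of_le_of_lt VM_abscissa (by exact_mod_cast hw)
  rw [deriv.fun_neg, LSeries_deriv habs, neg_neg]

lemma VM_c_bound (c : ℕ → ℤ) (hc : ∀ k : ℕ, c k = ∑ d ∈ k.divisors, μ d * (d : ℤ)) (k : ℕ) :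
    ‖(c (k + 1) : ℂ)‖ ≤ ((k : ℝ) + 1) ^ 2 := by
  have h1 : |c (k + 1)| ≤ ((k : ℤ) + 1) ^ 2 := by
    rw [hc]
    calc |∑ d ∈ (k + 1).divisors, μ d * (d : ℤ)|
        ≤ ∑ d ∈ (k + 1).divisors, |μ d * (d : ℤ)| := Finset.abs_sum_le_sum_abs _ _
      _ ≤ ∑ _d ∈ (k + 1).divisors, ((k : ℤ) + 1) := by
          refine Finset.sum_le_sum fun d hd => ?_
          have hd1 : d ≤ k + 1 := Nat.divisor_le hd
          calc |μ d * (d : ℤ)| = |μ d| * |(d : ℤ)| := abs_mul _ _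
            _ ≤ 1 * ((k : ℤ) + 1) := by
                refine mul_le_mul abs_moebius_le_one ?_ (abs_nonneg _) zero_le_one
                rw [Int.abs_natCast]
                exact_mod_cast hd1
            _ = (k : ℤ) + 1 := one_mul _
      _ ≤ ((k : ℤ) + 1) ^ 2 := by
          rw [Finset.sum_const, nsmul_eq_mul, sq]
          have hcard : (k + 1).divisors.card ≤ k + 1 := by
            have hsub : (k + 1).divisors ⊆ Finset.Icc 1 (k + 1) := fun d hd =>
              Finset.mem_Icc.mpr ⟨Nat.pos_of_mem_divisors hd, Nat.divisor_le hd⟩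
            simpa [Nat.card_Icc] using Finset.card_le_card hsub
          have : ((k + 1).divisors.card : ℤ) ≤ (k : ℤ) + 1 := by exact_mod_cast hcard
          nlinarith [Int.natCast_nonneg (k+1)]
  have h2 : ‖(c (k + 1) : ℂ)‖ = |(c (k + 1) : ℝ)| := by
    rw [← Complex.ofReal_intCast, Complex.norm_real, Real.norm_eq_abs]
  rw [h2]
  have : |(c (k + 1) : ℝ)| = ((|c (k + 1)| : ℤ) : ℝ) := by
    rw [Int.cast_abs]
  rw [this]
  exact_mod_cast h1

lemma VM_inner (c : ℕ → ℤ) (hc : ∀ k : ℕ, c k = ∑ d ∈ k.divisors, μ d * (d : ℤ))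
    (s : ℂ) (m : ℕ) :
    ∑' k : ℕ, (c (k + 1) : ℂ) * LSeries.term (Bf (k + 1)) s m
      = ((Λ m ^ 2 : ℝ) : ℂ) / (m : ℂ) ^ s := by
  rcases eq_or_ne m 0 with rfl | hm
  · simp [LSeries.term]
  rcases eq_or_ne (Λ m) 0 with hpp | hpp
  · have hterm : ∀ k : ℕ, (c (k + 1) : ℂ) * LSeries.term (Bf (k + 1)) s m = 0 := fun k => by
      rw [LSeries.term_of_ne_zero hm, Bf]
      split <;> simp [hpp]
    rw [tsum_congr hterm, tsum_zero, hpp]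
    simp
  · obtain ⟨p, j, hpp', hj, rfl⟩ := vonMangoldt_ne_zero_iff.mp hpp
    have hp : p.Prime := hpp'.nat_prime
    have hj0 : j ≠ 0 := hj.ne'
    set m : ℕ := p ^ j with hmdef
    have hm0 : m ≠ 0 := hm
    have hcond : ∀ d : ℕ, d ≠ 0 → ((∃ n : ℕ, n ^ d = m) ↔ d ∣ j) := by
      intro d hd
      constructor
      · rintro ⟨n, hn⟩
        have hnd : n ∣ m := hn ▸ dvd_pow_self n hd
        obtain ⟨i, hi, rfl⟩ := (Nat.dvd_prime_pow hp).mp hnd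
        rw [← pow_mul] at hn
        have hij : i * d = j := Nat.pow_right_injective hp.two_le hn
        exact Dvd.intro_left i hij
      · rintro ⟨e, rfl⟩
        exact ⟨p ^ e, by rw [← pow_mul, mul_comm]⟩
    set X : ℂ := ((Λ m * Real.log m : ℝ) : ℂ) with hX
    set M : ℂ := ((m : ℕ) : ℂ) ^ s with hM
    have hvan : ∀ k ∉ j.divisors.image (· - 1),
        (c (k + 1) : ℂ) * LSeries.term (Bf (k + 1)) s m = 0 := by
      intro k hk
      have hnot : ¬ ∃ n : ℕ, n ^ (k + 1) = m := by
        intro hex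
        have hdvd : (k + 1) ∣ j := (hcond (k + 1) (Nat.succ_ne_zero k)).mp hex
        exact hk (Finset.mem_image.mpr ⟨k + 1, Nat.mem_divisors.mpr ⟨hdvd, hj0⟩, rfl⟩)
      rw [LSeries.term_of_ne_zero hm0, Bf, if_neg hnot]
      simp
    rw [tsum_eq_sum hvan, Finset.sum_image (fun x hx y hy h => by
      have := Nat.pos_of_mem_divisors hx
      have := Nat.pos_of_mem_divisors hy
      omega)]
    have hsum_eq : ∀ d ∈ j.divisors, (c (d - 1 + 1) : ℂ) * LSeries.term (Bf (d - 1 + 1)) s m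
        = (c d : ℂ) / d * (X / M) := by
      intro d hd
      have hd1 : 0 < d := Nat.pos_of_mem_divisors hd
      have hdd : d - 1 + 1 = d := by omega
      rw [hdd, LSeries.term_of_ne_zero hm0, Bf,
        if_pos ((hcond d hd1.ne').mpr (Nat.mem_divisors.mp hd).1)]
      rw [← hX, ← hM]
      ring
    rw [Finset.sum_congr rfl hsum_eq, ← Finset.sum_mul]
    have hdiv : ∑ d ∈ j.divisors, (c d : ℂ) / d = 1 / (j : ℂ) := by
      have HZ := VM_Hsum c hc hj0
      have HC : ∑ d ∈ j.divisors, ((j / d : ℕ) : ℂ) * (c d : ℂ) = 1 := by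
        have hzc := congrArg (Int.cast : ℤ → ℂ) HZ
        push_cast at hzc
        exact hzc
      have hjC : (j : ℂ) ≠ 0 := Nat.cast_ne_zero.mpr hj0
      have HC2 : ∑ d ∈ j.divisors, (j : ℂ) * ((c d : ℂ) / d) = 1 := by
        rw [← HC]
        refine Finset.sum_congr rfl fun d hd => ?_
        have hdvd := (Nat.mem_divisors.mp hd).1
        have hd0 : (d : ℂ) ≠ 0 := Nat.cast_ne_zero.mpr (Nat.pos_of_mem_divisors hd).ne'
        rw [Nat.cast_div hdvd hd0]
        field_simp
      rw [← Finset.mul_sum] at HC2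
      field_simp at HC2 ⊢
      linear_combination HC2
    rw [hdiv]
    have hΛ : Λ m = Real.log p := by
      rw [hmdef, vonMangoldt_apply_pow hj0, vonMangoldt_apply_prime hp]
    have hlogm : Real.log m = j * Real.log p := by
      rw [hmdef]
      rw [Nat.cast_pow, Real.log_pow]
    have hjC : (j : ℂ) ≠ 0 := Nat.cast_ne_zero.mpr hj0
    have hXval : X = (((j : ℝ) * Real.log p ^ 2 : ℝ) : ℂ) := by
      rw [hX, hΛ, hlogm]
      push_cast
      ring
    rw [hXval, hΛ, Complex.ofReal_mul, Complex.ofReal_natCast, ← mul_div_assoc]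
    congr 1
    field_simp

/-- For `Re s > 1`, `∑ Λ(n)²/n^s = ∑_{k≥1} c_k (ζ'/ζ)'(ks)` with
`c_k = ∑_{d|k} μ(d) d`, the series over `k` converging absolutely. -/
theorem vonMangoldt_sq_eq_sum_logDeriv_deriv (s : ℂ) (hs : 1 < s.re)
    (c : ℕ → ℤ) (hc : ∀ k : ℕ, c k = ∑ d ∈ k.divisors, μ d * (d : ℤ)) :
    Summable (fun k : ℕ =>
      ‖(c (k + 1) : ℂ) *
        deriv (fun w : ℂ => deriv riemannZeta w / riemannZeta w) ((k + 1 : ℕ) * s)‖) ∧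
    ∑' n : ℕ, ((Λ n : ℝ) ^ 2 : ℝ) / (n : ℂ) ^ s =
      ∑' k : ℕ, (c (k + 1) : ℂ) *
        deriv (fun w : ℂ => deriv riemannZeta w / riemannZeta w) ((k + 1 : ℕ) * s) := by
  have hσ0 : (0:ℝ) < s.re := lt_trans one_pos hs
  set r : ℝ := (2:ℝ) ^ (-s.re) with hrdef
  have hr0 : 0 < r := Real.rpow_pos_of_pos two_pos _
  have hr1 : r < 1 := Real.rpow_lt_one_of_one_lt_of_neg one_lt_two (by linarith)
  have hS0 : LSeriesSummable (logMul ↗Λ) s := by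
    have := VM_summable_logMul (k := 1) one_ne_zero hs
    simpa using this
  have hSnorm : Summable fun n => ‖LSeries.term (logMul ↗Λ) s n‖ := summable_norm_iff.mpr hS0
  set C : ℝ := ∑' n : ℕ, ‖LSeries.term (logMul ↗Λ) s n‖ with hCdef
  have hsummable_k : ∀ k : ℕ, LSeriesSummable (logMul ↗Λ) (((k + 1 : ℕ) : ℂ) * s) :=
    fun k => VM_summable_logMul (Nat.succ_ne_zero k) hs
  have hnormsum_k : ∀ k : ℕ,
      Summable fun n => ‖LSeries.term (logMul ↗Λ) (((k + 1 : ℕ) : ℂ) * s) n‖ :=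
    fun k => summable_norm_iff.mpr (hsummable_k k)
  have hrow_le : ∀ k : ℕ,
      ∑' n : ℕ, ‖LSeries.term (logMul ↗Λ) (((k + 1 : ℕ) : ℂ) * s) n‖ ≤ r ^ k * C := by
    intro k
    calc ∑' n : ℕ, ‖LSeries.term (logMul ↗Λ) (((k + 1 : ℕ) : ℂ) * s) n‖
        ≤ ∑' n : ℕ, r ^ k * ‖LSeries.term (logMul ↗Λ) s n‖ :=
          Summable.tsum_le_tsum (fun n => VM_term_bound hs k n) (hnormsum_k k) (hSnorm.mul_left _)
      _ = r ^ k * C := tsum_mul_left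
  have hderiv_eq : ∀ k : ℕ,
      deriv (fun w : ℂ => deriv riemannZeta w / riemannZeta w) ((k + 1 : ℕ) * s) =
        LSeries (logMul ↗Λ) (((k + 1 : ℕ) : ℂ) * s) :=
    fun k => VM_deriv_eq (VM_re_mul (Nat.succ_ne_zero k) hs)
  have hterm_bound : ∀ k : ℕ,
      ‖(c (k + 1) : ℂ) * deriv (fun w : ℂ => deriv riemannZeta w / riemannZeta w)
        ((k + 1 : ℕ) * s)‖ ≤ ((k : ℝ) + 1) ^ 2 * (r ^ k * C) := by
    intro k
    rw [norm_mul, hderiv_eq k]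
    have hC0 : 0 ≤ C := tsum_nonneg fun n => norm_nonneg _
    refine mul_le_mul (VM_c_bound c hc k) ?_ (norm_nonneg _) (by positivity)
    refine le_trans ?_ (hrow_le k)
    rw [LSeries]
    exact norm_tsum_le_tsum_norm (hnormsum_k k)
  have hKsum : Summable fun k : ℕ => ((k : ℝ) + 1) ^ 2 * (r ^ k * C) := by
    have hr' : ‖r‖ < 1 := by rwa [Real.norm_eq_abs, abs_of_pos hr0]
    have h1 : Summable fun k : ℕ => ((k : ℝ) + 1) ^ 2 * r ^ k := by
      have ha := summable_pow_mul_geometric_of_norm_lt_one (R := ℝ) 2 hr'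
      have hb := summable_pow_mul_geometric_of_norm_lt_one (R := ℝ) 1 hr'
      have hc' := summable_geometric_of_lt_one hr0.le hr1
      refine (ha.add ((hb.mul_left 2).add hc')).congr fun k => ?_
      ring
    refine (h1.mul_right C).congr fun k => ?_
    ring
  have part1 : Summable (fun k : ℕ =>
      ‖(c (k + 1) : ℂ) *
        deriv (fun w : ℂ => deriv riemannZeta w / riemannZeta w) ((k + 1 : ℕ) * s)‖) :=
    Summable.of_nonneg_of_le (fun k => norm_nonneg _) hterm_bound hKsum
  refine ⟨part1, ?_⟩
  set f : ℕ → ℕ → ℂ := fun k m => (c (k + 1) : ℂ) * LSeries.term (Bf (k + 1)) s m with hfdef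
  have hf_norm_inner : ∀ k : ℕ, Summable fun m => ‖f k m‖ := by
    intro k
    simp only [hfdef, norm_mul]
    exact (summable_norm_iff.mpr (VM_summable_term_B (Nat.succ_ne_zero k) hs)).mul_left _
  have hf_rows : ∀ k : ℕ, ∑' m : ℕ, ‖f k m‖ ≤ ((k : ℝ) + 1) ^ 2 * (r ^ k * C) := by
    intro k
    have heq : ∑' m : ℕ, ‖f k m‖ =
        ‖(c (k + 1) : ℂ)‖ * ∑' m : ℕ, ‖LSeries.term (Bf (k + 1)) s m‖ := by
      simp only [hfdef, norm_mul]
      exact tsum_mul_left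
    rw [heq, VM_tsum_norm_term_B (Nat.succ_ne_zero k) s]
    exact mul_le_mul (VM_c_bound c hc k) (hrow_le k)
      (tsum_nonneg fun _ => norm_nonneg _) (by positivity)
  have huncurry : Summable (Function.uncurry f) := by
    apply Summable.of_norm
    rw [summable_prod_of_nonneg (fun p => norm_nonneg _)]
    exact ⟨fun k => hf_norm_inner k,
      Summable.of_nonneg_of_le (fun k => tsum_nonneg fun m => norm_nonneg _) hf_rows hKsum⟩
  calc ∑' n : ℕ, ((Λ n : ℝ) ^ 2 : ℝ) / (n : ℂ) ^ s
      = ∑' m : ℕ, ∑' k : ℕ, f k m := tsum_congr fun m => (VM_inner c hc s m).symm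
    _ = ∑' k : ℕ, ∑' m : ℕ, f k m := Summable.tsum_comm huncurry
    _ = ∑' k : ℕ, (c (k + 1) : ℂ) *
          deriv (fun w : ℂ => deriv riemannZeta w / riemannZeta w) ((k + 1 : ℕ) * s) := by
        refine tsum_congr fun k => ?_
        rw [hderiv_eq k, ← VM_tsum_term_B (Nat.succ_ne_zero k) s]
        exact tsum_mul_left
end

section
/- The Euler product ∏_p (1 − 1/p^{1+s})(1 − 2/p + 1/p^{1+s})/(1 − 1/p)² equals ∏_p (1 − (1 − p^{−s})²/(p−1)²), and it converges for Re(s) ≥ 0; moreover, as s → 0 the product A(s) satisfies A(s) = 1 + O(s²). -/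
open Asymptotics Filter Complex

/-- Finite product bound. -/
lemma finprod_one_add_sub_one_norm {ι : Type*} (f : ι → ℂ) (F : Finset ι) :
    ‖∏ i ∈ F, (1 + f i) - 1‖ ≤ ∏ i ∈ F, (1 + ‖f i‖) - 1 := by
  classical
  induction F using Finset.induction_on with
  | empty => simp
  | @insert j F hj ih =>
    rw [Finset.prod_insert hj, Finset.prod_insert hj]
    have hPQ : ‖∏ i ∈ F, (1 + f i)‖ ≤ ∏ i ∈ F, (1 + ‖f i‖) := by
      rw [norm_prod]
      refine Finset.prod_le_prod (fun i _ => norm_nonneg _)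
        (fun i _ => (norm_add_le 1 (f i)).trans (by simp))
    have key : (1 + f j) * (∏ i ∈ F, (1 + f i)) - 1
        = ((∏ i ∈ F, (1 + f i)) - 1) + f j * (∏ i ∈ F, (1 + f i)) := by ring
    rw [key]
    refine (norm_add_le _ _).trans ?_
    rw [norm_mul]
    nlinarith [norm_nonneg (f j), norm_nonneg (∏ i ∈ F, (1 + f i))]

/-- Infinite product bound. -/
lemma tprod_one_add_sub_one_norm {ι : Type*} (f : ι → ℂ) (hf : Summable fun i => ‖f i‖)
    (hm : Multipliable fun i => 1 + f i) :
    ‖(∏' i, (1 + f i)) - 1‖ ≤ Real.exp (∑' i, ‖f i‖) - 1 := by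
  have hp := hm.hasProd
  have h2 : Tendsto (fun F : Finset ι => ‖(∏ i ∈ F, (1 + f i)) - 1‖) atTop
      (nhds ‖(∏' i, (1 + f i)) - 1‖) := (hp.sub tendsto_const_nhds).norm
  refine le_of_tendsto h2 (Eventually.of_forall fun F => ?_)
  refine (finprod_one_add_sub_one_norm f F).trans (sub_le_sub_right ?_ 1)
  calc ∏ i ∈ F, (1 + ‖f i‖) ≤ ∏ i ∈ F, Real.exp ‖f i‖ :=
        Finset.prod_le_prod (fun i _ => by positivity)
          (fun i _ => by linarith [Real.add_one_le_exp ‖f i‖])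
    _ = Real.exp (∑ i ∈ F, ‖f i‖) := (Real.exp_sum F _).symm
    _ ≤ Real.exp (∑' i, ‖f i‖) :=
        Real.exp_le_exp.mpr (Summable.sum_le_tsum F (fun i _ => norm_nonneg _) hf)

lemma multipliable_of_summable_log {ι : Type*} {f : ι → ℂ} (h0 : ∀ i, f i ≠ 0)
    (h : Summable fun i => Complex.log (f i)) : Multipliable f := by
  have he : (fun i => Complex.exp (Complex.log (f i))) = f :=
    funext fun i => Complex.exp_log (h0 i)
  have hh := h.hasSum.cexp
  rw [Function.comp_def, he] at hh
  exact ⟨_, hh⟩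

lemma norm_one_sub_cpow_le {p : ℕ} (hp : 2 ≤ p) {s : ℂ} (hs : 0 ≤ s.re) :
    ‖1 - (p : ℂ) ^ (-s)‖ ≤ ‖s‖ * Real.log p := by
  have hp0 : (0:ℝ) < (p:ℝ) := by positivity
  have hL : (0:ℝ) ≤ Real.log p := Real.log_natCast_nonneg p
  set c : ℂ := -(s * (Real.log p : ℝ)) with hc
  have hF : ∀ t ∈ Set.Icc (0:ℝ) 1,
      HasDerivWithinAt (fun t : ℝ => Complex.exp ((t:ℂ) * c))
        (Complex.exp ((t:ℂ) * c) * c) (Set.Icc (0:ℝ) 1) t := by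
    intro t ht
    have h1 : HasDerivAt (fun t : ℝ => (t : ℂ) * c) c t := by
      simpa using (Complex.ofRealCLM.hasDerivAt (x := t)).mul_const c
    exact h1.cexp.hasDerivWithinAt
  have hbound : ∀ t ∈ Set.Icc (0:ℝ) 1, ‖Complex.exp ((t:ℂ) * c) * c‖ ≤ ‖s‖ * Real.log p := by
    intro t ht
    rw [norm_mul]
    have h1 : ‖Complex.exp ((t:ℂ) * c)‖ ≤ 1 := by
      rw [Complex.norm_exp]
      have : ((t:ℂ) * c).re ≤ 0 := by
        simp only [hc, Complex.mul_re, Complex.neg_re, Complex.mul_re, Complex.ofReal_re,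
          Complex.ofReal_im, Complex.neg_im, Complex.mul_im]
        have := ht.1
        nlinarith [mul_nonneg this (mul_nonneg hs hL)]
      calc Real.exp ((t:ℂ) * c).re ≤ Real.exp 0 := Real.exp_le_exp.mpr this
        _ = 1 := Real.exp_zero
    have h2 : ‖c‖ = ‖s‖ * Real.log p := by
      rw [hc, norm_neg, norm_mul, Complex.norm_real, Real.norm_eq_abs, _root_.abs_of_nonneg hL]
    rw [h2]
    nlinarith [norm_nonneg s, mul_nonneg (norm_nonneg s) hL]
  have := (convex_Icc (0:ℝ) 1).norm_image_sub_le_of_norm_hasDerivWithin_le hF hbound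
    (Set.left_mem_Icc.mpr zero_le_one) (Set.right_mem_Icc.mpr zero_le_one)
  have hcp : (p : ℂ) ^ (-s) = Complex.exp ((1:ℂ) * c) := by
    rw [one_mul, hc, Complex.cpow_def_of_ne_zero (by exact_mod_cast hp0.ne'),
      ← Complex.natCast_log]
    ring_nf
  calc ‖1 - (p : ℂ) ^ (-s)‖
      = ‖Complex.exp ((1:ℂ) * c) - Complex.exp ((0:ℂ) * c)‖ := by
        rw [hcp]; simp [norm_sub_rev]
    _ ≤ (‖s‖ * Real.log p) * ‖(1:ℝ) - 0‖ := by
        simpa using this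
    _ = ‖s‖ * Real.log p := by simp

lemma norm_nat_sub_one {p : ℕ} (hp : 2 ≤ p) : ‖(p:ℂ) - 1‖ = (p:ℝ) - 1 := by
  have h : (p:ℂ) - 1 = (((p:ℝ) - 1 : ℝ) : ℂ) := by push_cast; ring
  rw [h, Complex.norm_real, Real.norm_eq_abs, _root_.abs_of_nonneg]
  have : (2:ℝ) ≤ (p:ℝ) := by exact_mod_cast hp
  linarith

lemma norm_cpow_le_one {p : ℕ} (hp : 2 ≤ p) {s : ℂ} (hs : 0 ≤ s.re) : ‖(p:ℂ) ^ (-s)‖ ≤ 1 := by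
  have hp0 : (0:ℝ) < (p:ℝ) := by positivity
  have h : ((p:ℝ):ℂ) = (p:ℂ) := by push_cast; rfl
  rw [← h, Complex.norm_cpow_eq_rpow_re_of_pos hp0]
  have h1 : (1:ℝ) ≤ (p:ℝ) := by exact_mod_cast hp.trans' (by norm_num)
  exact Real.rpow_le_one_of_one_le_of_nonpos h1 (by simpa using neg_nonpos.mpr hs)

lemma den_sq_bound {p : ℕ} (hp : 2 ≤ p) : ((p:ℝ)/2)^2 ≤ ((p:ℝ) - 1)^2 ∧ (0:ℝ) < ((p:ℝ)/2)^2 := by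
  have h2 : (2:ℝ) ≤ (p:ℝ) := by exact_mod_cast hp
  constructor
  · nlinarith
  · positivity

lemma summable_log_sq_div :
    Summable (fun p : Nat.Primes => (Real.log p)^2 / ((p:ℝ) - 1)^2) := by
  refine Summable.of_nonneg_of_le (f := fun p : Nat.Primes => 64 * (p:ℝ) ^ (-(3/2 : ℝ)))
    (fun p => by positivity) (fun p => ?_)
    ((Nat.Primes.summable_rpow.mpr (by norm_num)).mul_left 64)
  · 
    have hp2 : 2 ≤ (p:ℕ) := p.2.two_le
    have h2 : (2:ℝ) ≤ (p:ℝ) := by exact_mod_cast hp2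
    have hppos : (0:ℝ) < (p:ℝ) := by linarith
    have hlog : Real.log p ≤ 4 * (p:ℝ) ^ ((1:ℝ)/4) := by
      have := Real.log_le_rpow_div (x := (p:ℝ)) (ε := 1/4) (by positivity) (by norm_num)
      linarith
    have hrp : ((p:ℝ) ^ ((1:ℝ)/4))^2 = (p:ℝ) ^ ((1:ℝ)/2) := by
      rw [← Real.rpow_natCast ((p:ℝ) ^ ((1:ℝ)/4)) 2, ← Real.rpow_mul hppos.le]
      norm_num
    have hsq : (Real.log p)^2 ≤ 16 * (p:ℝ) ^ ((1:ℝ)/2) := by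
      have h0 : 0 ≤ Real.log p := Real.log_natCast_nonneg _
      calc (Real.log p)^2 ≤ (4 * (p:ℝ) ^ ((1:ℝ)/4))^2 := by
            apply pow_le_pow_left₀ h0 hlog
        _ = 16 * (p:ℝ) ^ ((1:ℝ)/2) := by rw [mul_pow, hrp]; norm_num
    obtain ⟨hd1, hd2⟩ := den_sq_bound hp2
    have step1 : (Real.log p)^2 / ((p:ℝ) - 1)^2 ≤ (16 * (p:ℝ) ^ ((1:ℝ)/2)) / (((p:ℝ)/2)^2) :=
      div_le_div₀ (by positivity) hsq hd2 hd1
    refine step1.trans (le_of_eq ?_)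
    have hp2r : (p:ℝ)^(2:ℝ) = (p:ℝ)^2 := by
      rw [show (2:ℝ) = ((2:ℕ):ℝ) by norm_num, Real.rpow_natCast]
    have key : (p:ℝ) ^ (-(3/2 : ℝ)) = (p:ℝ) ^ ((1:ℝ)/2) / (p:ℝ)^2 := by
      rw [← hp2r, ← Real.rpow_sub hppos]; norm_num
    show 16 * (p:ℝ) ^ ((1:ℝ)/2) / (((p:ℝ)/2)^2) = 64 * (p:ℝ) ^ (-(3/2 : ℝ))
    rw [key]
    field_simp
    ring

lemma exp_sub_one_le_three_mul {x : ℝ} (hx0 : 0 ≤ x) (hx1 : x ≤ 1) :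
    Real.exp x - 1 ≤ 3 * x := by
  have h1 := Real.add_one_le_exp (-x)
  have h2 : Real.exp (-x) * Real.exp x = 1 := by rw [← Real.exp_add]; simp
  have h3 : Real.exp x ≤ Real.exp 1 := Real.exp_le_exp.mpr hx1
  have h4 : Real.exp 1 < 2.7182818286 := Real.exp_one_lt_d9
  have h5 := Real.exp_pos x
  nlinarith [mul_le_mul_of_nonneg_right h1 h5.le]

/-- The Euler product `∏_p (1 − p^{-1-s})(1 − 2/p + p^{-1-s})/(1 − 1/p)²` has factors
equal to `1 − (1 − p^{−s})²/(p−1)²`, converges for `Re s ≥ 0`, and the resulting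
function `A` satisfies `A(s) = 1 + O(s²)` as `s → 0` (within `Re s ≥ 0`). -/
theorem eulerProduct_A (A : ℂ → ℂ)
    (hA : ∀ s : ℂ, A s = ∏' p : Nat.Primes, (1 - (1 - (p : ℂ) ^ (-s)) ^ 2 / ((p : ℂ) - 1) ^ 2)) :
    (∀ p : Nat.Primes, ∀ s : ℂ,
      (1 - (p : ℂ) ^ (-(1 + s))) * (1 - 2 / (p : ℂ) + (p : ℂ) ^ (-(1 + s))) / (1 - 1 / (p : ℂ)) ^ 2
        = 1 - (1 - (p : ℂ) ^ (-s)) ^ 2 / ((p : ℂ) - 1) ^ 2) ∧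
    (∀ s : ℂ, 0 ≤ s.re →
      Multipliable (fun p : Nat.Primes => 1 - (1 - (p : ℂ) ^ (-s)) ^ 2 / ((p : ℂ) - 1) ^ 2)) ∧
    (fun s : ℂ => A s - 1) =O[nhdsWithin 0 {s : ℂ | 0 ≤ s.re}] (fun s : ℂ => s ^ 2) := by
  have hcrude : ∀ (p : Nat.Primes) {s : ℂ}, 0 ≤ s.re →
      ‖(1 - ((p:ℕ):ℂ) ^ (-s)) ^ 2 / (((p:ℕ):ℂ) - 1) ^ 2‖ ≤ 4 / (((p:ℕ):ℝ) - 1)^2 := by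
    intro p s hs
    have hp2 := p.2.two_le
    have h2 : (2:ℝ) ≤ ((p:ℕ):ℝ) := by exact_mod_cast hp2
    have hd : (0:ℝ) < (((p:ℕ):ℝ) - 1)^2 := by nlinarith
    rw [norm_div, norm_pow, norm_pow, norm_nat_sub_one hp2]
    have h1 : ‖1 - ((p:ℕ):ℂ) ^ (-s)‖ ≤ 2 := by
      calc ‖1 - ((p:ℕ):ℂ) ^ (-s)‖ ≤ ‖(1:ℂ)‖ + ‖((p:ℕ):ℂ) ^ (-s)‖ := norm_sub_le _ _
        _ ≤ 1 + 1 := by simp; exact norm_cpow_le_one hp2 hs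
        _ = 2 := by norm_num
    exact div_le_div₀ (by norm_num) (by nlinarith [norm_nonneg (1 - ((p:ℕ):ℂ) ^ (-s))]) hd le_rfl
  have hub : ∀ (p : Nat.Primes) {s : ℂ}, 0 ≤ s.re →
      ‖(1 - ((p:ℕ):ℂ) ^ (-s)) ^ 2 / (((p:ℕ):ℂ) - 1) ^ 2‖
        ≤ ‖s‖^2 * ((Real.log p)^2 / (((p:ℕ):ℝ) - 1)^2) := by
    intro p s hs
    have hp2 := p.2.two_le
    have h2 : (2:ℝ) ≤ ((p:ℕ):ℝ) := by exact_mod_cast hp2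
    have hd : (0:ℝ) < (((p:ℕ):ℝ) - 1)^2 := by nlinarith
    rw [norm_div, norm_pow, norm_pow, norm_nat_sub_one hp2,
      show ‖s‖^2 * ((Real.log p)^2 / (((p:ℕ):ℝ) - 1)^2)
        = (‖s‖ * Real.log p)^2 / (((p:ℕ):ℝ) - 1)^2 by ring]
    exact (div_le_div_iff_of_pos_right hd).mpr
      (pow_le_pow_left₀ (norm_nonneg _) (norm_one_sub_cpow_le hp2 hs) 2)
  have key2 : ∀ s : ℂ, 0 ≤ s.re →
      Multipliable (fun p : Nat.Primes => 1 - (1 - (p : ℂ) ^ (-s)) ^ 2 / ((p : ℂ) - 1) ^ 2) := by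
    intro s hs
    by_cases hzero : ∃ p : Nat.Primes, (1 - (1 - (p:ℂ) ^ (-s)) ^ 2 / ((p:ℂ) - 1) ^ 2) = 0
    · obtain ⟨p0, hp0⟩ := hzero
      refine ⟨0, ?_⟩
      rw [HasProd]
      have hev : ∀ᶠ F : Finset Nat.Primes in atTop,
          (0:ℂ) = ∏ p ∈ F, (1 - (1 - (p:ℂ) ^ (-s)) ^ 2 / ((p:ℂ) - 1) ^ 2) := by
        filter_upwards [eventually_ge_atTop ({p0} : Finset Nat.Primes)] with F hF
        exact (Finset.prod_eq_zero (hF (Finset.mem_singleton_self p0)) hp0).symm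
      exact Tendsto.congr' hev tendsto_const_nhds
    · push_neg at hzero
      apply multipliable_of_summable_log hzero
      refine Summable.of_norm_bounded_eventually
        (g := fun p : Nat.Primes => 24 * ((p:ℕ):ℝ) ^ (-(2:ℝ)))
        ((Nat.Primes.summable_rpow.mpr (by norm_num)).mul_left 24) ?_
      rw [Filter.eventually_cofinite]
      refine Set.Finite.subset (Set.Finite.preimage
        Subtype.coe_injective.injOn (Set.finite_Iic (3:ℕ))) ?_
      intro p hp
      simp only [Set.mem_setOf_eq, not_le] at hp
      simp only [Set.mem_preimage, Set.mem_Iic]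
      by_contra hgt
      push_neg at hgt
      have hp' : 24 * ((p:ℕ):ℝ) ^ (-(2:ℝ))
          < ‖Complex.log (1 - (1 - ((p:ℕ):ℂ) ^ (-s)) ^ 2 / (((p:ℕ):ℂ) - 1) ^ 2)‖ := hp
      apply absurd ?_ (not_le.mpr hp')
      have hp4 : (4:ℝ) ≤ ((p:ℕ):ℝ) := by exact_mod_cast hgt
      have hd9 : (9:ℝ) ≤ (((p:ℕ):ℝ) - 1)^2 := by nlinarith
      have hu2 : ‖(1 - ((p:ℕ):ℂ) ^ (-s)) ^ 2 / (((p:ℕ):ℂ) - 1) ^ 2‖ ≤ 1/2 := by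
        refine (hcrude p hs).trans ?_
        rw [div_le_iff₀ (by nlinarith)]
        nlinarith
      have hlog := Complex.norm_log_one_add_half_le_self
        (z := -((1 - ((p:ℕ):ℂ) ^ (-s)) ^ 2 / (((p:ℕ):ℂ) - 1) ^ 2)) (by rwa [norm_neg])
      rw [show (1:ℂ) + -((1 - ((p:ℕ):ℂ) ^ (-s)) ^ 2 / (((p:ℕ):ℂ) - 1) ^ 2)
        = 1 - (1 - ((p:ℕ):ℂ) ^ (-s)) ^ 2 / (((p:ℕ):ℂ) - 1) ^ 2 by ring, norm_neg] at hlog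
      refine hlog.trans ?_
      have hb := hcrude p hs
      have hrw : ((p:ℕ):ℝ) ^ (-(2:ℝ)) = (((p:ℕ):ℝ)^2)⁻¹ := by
        rw [Real.rpow_neg (by positivity), show ((2:ℝ)) = ((2:ℕ):ℝ) by norm_num,
          Real.rpow_natCast]
      rw [hrw]
      have hden : (0:ℝ) < (((p:ℕ):ℝ) - 1)^2 := by nlinarith
      have hquarter : 1/(((p:ℕ):ℝ) - 1)^2 ≤ 4/((p:ℕ):ℝ)^2 := by
        rw [div_le_div_iff₀ hden (by positivity)]
        nlinarith
      have : (3:ℝ)/2 * ‖(1 - ((p:ℕ):ℂ) ^ (-s)) ^ 2 / (((p:ℕ):ℂ) - 1) ^ 2‖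
          ≤ 3/2 * (4 / (((p:ℕ):ℝ) - 1)^2) := by nlinarith [norm_nonneg ((1 - ((p:ℕ):ℂ) ^ (-s)) ^ 2 / (((p:ℕ):ℂ) - 1) ^ 2)]
      refine this.trans ?_
      calc (3:ℝ)/2 * (4 / (((p:ℕ):ℝ) - 1)^2) = 6 * (1 / (((p:ℕ):ℝ) - 1)^2) := by ring
        _ ≤ 6 * (4 / ((p:ℕ):ℝ)^2) := by linarith
        _ = 24 * (((p:ℕ):ℝ)^2)⁻¹ := by rw [div_eq_mul_inv]; ring
  refine ⟨?_, key2, ?_⟩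
  · intro p s
    have hp2 := p.2.two_le
    have hp0 : ((p:ℕ):ℂ) ≠ 0 := Nat.cast_ne_zero.mpr (by omega)
    have hp1 : ((p:ℕ):ℂ) ≠ 1 := by
      intro h
      have : ((p:ℕ):ℂ) = ((1:ℕ):ℂ) := by simpa using h
      exact absurd (Nat.cast_inj.mp this) (by omega)
    have h1 : ((p:ℕ):ℂ) - 1 ≠ 0 := sub_ne_zero.mpr hp1
    rw [show -(1+s) = (-1) + (-s) by ring, Complex.cpow_add _ _ hp0, Complex.cpow_neg_one]
    field_simp
    ring
  · set C := ∑' p : Nat.Primes, (Real.log p)^2 / (((p:ℕ):ℝ) - 1)^2 with hCdef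
    have hC0 : 0 ≤ C := tsum_nonneg (fun p => by positivity)
    rw [isBigO_iff]
    refine ⟨3 * C, ?_⟩
    have hδpos : 0 < min 1 (1/(C+1)) := by positivity
    filter_upwards [mem_nhdsWithin_of_mem_nhds (Metric.ball_mem_nhds (0:ℂ) hδpos),
      self_mem_nhdsWithin] with s hs1 hs2
    have hre : 0 ≤ s.re := hs2
    have hsn : ‖s‖ < min 1 (1/(C+1)) := by
      simpa [Metric.mem_ball, dist_zero_right] using hs1
    have hsum_u : Summable (fun p : Nat.Primes =>
        ‖(1 - ((p:ℕ):ℂ) ^ (-s)) ^ 2 / (((p:ℕ):ℂ) - 1) ^ 2‖) :=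
      Summable.of_nonneg_of_le (fun _ => norm_nonneg _) (fun p => hub p hre)
        (summable_log_sq_div.mul_left (‖s‖^2))
    have htsum : ∑' p : Nat.Primes, ‖(1 - ((p:ℕ):ℂ) ^ (-s)) ^ 2 / (((p:ℕ):ℂ) - 1) ^ 2‖
        ≤ ‖s‖^2 * C := by
      calc ∑' p : Nat.Primes, ‖(1 - ((p:ℕ):ℂ) ^ (-s)) ^ 2 / (((p:ℕ):ℂ) - 1) ^ 2‖
          ≤ ∑' p : Nat.Primes, ‖s‖^2 * ((Real.log p)^2 / (((p:ℕ):ℝ) - 1)^2) :=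
            Summable.tsum_le_tsum (fun p => hub p hre) hsum_u (summable_log_sq_div.mul_left (‖s‖^2))
        _ = ‖s‖^2 * C := tsum_mul_left
    have hmult := key2 s hre
    have heq : (fun p : Nat.Primes => 1 - (1 - ((p:ℕ):ℂ) ^ (-s)) ^ 2 / (((p:ℕ):ℂ) - 1) ^ 2)
        = (fun p : Nat.Primes =>
            1 + (-((1 - ((p:ℕ):ℂ) ^ (-s)) ^ 2 / (((p:ℕ):ℂ) - 1) ^ 2))) :=
      funext fun p => by ring
    have hbound := tprod_one_add_sub_one_norm
      (fun p : Nat.Primes => -((1 - ((p:ℕ):ℂ) ^ (-s)) ^ 2 / (((p:ℕ):ℂ) - 1) ^ 2))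
      (by simpa only [norm_neg] using hsum_u) (heq ▸ hmult)
    simp only [norm_neg] at hbound
    have hε0 : 0 ≤ ∑' p : Nat.Primes, ‖(1 - ((p:ℕ):ℂ) ^ (-s)) ^ 2 / (((p:ℕ):ℂ) - 1) ^ 2‖ :=
      tsum_nonneg fun p => norm_nonneg _
    have hs1' : ‖s‖ ≤ 1 := (hsn.trans_le (min_le_left _ _)).le
    have hs2' : ‖s‖ ≤ 1/(C+1) := (hsn.trans_le (min_le_right _ _)).le
    have hε1 : ∑' p : Nat.Primes, ‖(1 - ((p:ℕ):ℂ) ^ (-s)) ^ 2 / (((p:ℕ):ℂ) - 1) ^ 2‖ ≤ 1 := by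
      refine htsum.trans ?_
      have hn0 := norm_nonneg s
      have h1 : ‖s‖^2 ≤ 1/(C+1) := by nlinarith
      have h2 : ‖s‖^2 * C ≤ (1/(C+1)) * C := mul_le_mul_of_nonneg_right h1 hC0
      refine h2.trans ?_
      rw [div_mul_eq_mul_div, one_mul, div_le_one (by linarith)]
      linarith
    rw [hA s, heq]
    calc ‖(∏' p : Nat.Primes,
          (1 + -((1 - ((p:ℕ):ℂ) ^ (-s)) ^ 2 / (((p:ℕ):ℂ) - 1) ^ 2))) - 1‖
        ≤ Real.exp (∑' p : Nat.Primes,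
            ‖(1 - ((p:ℕ):ℂ) ^ (-s)) ^ 2 / (((p:ℕ):ℂ) - 1) ^ 2‖) - 1 := hbound
      _ ≤ 3 * ∑' p : Nat.Primes, ‖(1 - ((p:ℕ):ℂ) ^ (-s)) ^ 2 / (((p:ℕ):ℂ) - 1) ^ 2‖ :=
          exp_sub_one_le_three_mul hε0 hε1
      _ ≤ 3 * (‖s‖^2 * C) := by linarith
      _ = 3 * C * ‖s^2‖ := by rw [norm_pow]; ring
end

section
/- For complex s, the function A(s) = ∏_p (1 − (1−p^{−s})²/(p−1)²) admits the absolutely convergent series representation A(s) = ∑_{n=1}^∞ (μ(n)/φ(n)²) ∑_{d,δ | n} μ(d)μ(δ)(dδ)^{−s} for Re(s) ≥ 0. -/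
open ArithmeticFunction
open scoped ArithmeticFunction.Moebius ArithmeticFunction.zeta

noncomputable def cfun (s : ℂ) : ArithmeticFunction ℂ :=
  ⟨fun n => if n = 0 then 0 else (n : ℂ) ^ (-s), by simp⟩

lemma cfun_apply (s : ℂ) {n : ℕ} (hn : n ≠ 0) : cfun s n = (n : ℂ) ^ (-s) := by
  simp [cfun, hn]

lemma cfun_mult (s : ℂ) : (cfun s).IsMultiplicative := by
  constructor
  · rw [cfun_apply s one_ne_zero]
    simp
  · intro m n h
    rcases eq_or_ne m 0 with rfl | hm
    · simp [cfun]
    rcases eq_or_ne n 0 with rfl | hn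
    · simp [cfun]
    rw [cfun_apply s (mul_ne_zero hm hn), cfun_apply s hm, cfun_apply s hn,
      Nat.cast_mul, Complex.natCast_mul_natCast_cpow]

noncomputable def Tfun (s : ℂ) : ArithmeticFunction ℂ :=
  (ArithmeticFunction.pmul (μ : ArithmeticFunction ℂ) (cfun s)) * (ζ : ArithmeticFunction ℂ)

lemma Tfun_mult (s : ℂ) : (Tfun s).IsMultiplicative :=
  (isMultiplicative_moebius.intCast.pmul (cfun_mult s)).mul isMultiplicative_zeta.natCast

lemma Tfun_apply (s : ℂ) (n : ℕ) :
    Tfun s n = ∑ d ∈ n.divisors, (μ d : ℂ) * (d : ℂ) ^ (-s) := by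
  rw [Tfun, coe_mul_zeta_apply]
  refine Finset.sum_congr rfl fun d hd => ?_
  rw [ArithmeticFunction.pmul_apply, ArithmeticFunction.intCoe_apply,
    cfun_apply s (Nat.pos_of_mem_divisors hd).ne']

lemma inner_eq (s : ℂ) (n : ℕ) :
    (∑ d ∈ n.divisors, ∑ δ ∈ n.divisors,
      (μ d : ℂ) * (μ δ : ℂ) * ((d * δ : ℕ) : ℂ) ^ (-s)) = (Tfun s n) ^ 2 := by
  rw [Tfun_apply, sq, Finset.sum_mul_sum]
  refine Finset.sum_congr rfl fun d _ => Finset.sum_congr rfl fun δ _ => ?_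
  rw [Nat.cast_mul, Complex.natCast_mul_natCast_cpow]
  ring

noncomputable def Ffun (s : ℂ) : ArithmeticFunction ℂ :=
  ⟨fun n => ((μ n : ℂ) / (Nat.totient n : ℂ) ^ 2) * (Tfun s n) ^ 2, by simp⟩

lemma Ffun_apply (s : ℂ) (n : ℕ) :
    Ffun s n = ((μ n : ℂ) / (Nat.totient n : ℂ) ^ 2) *
      ∑ d ∈ n.divisors, ∑ δ ∈ n.divisors,
        (μ d : ℂ) * (μ δ : ℂ) * ((d * δ : ℕ) : ℂ) ^ (-s) := by
  rw [inner_eq]; rfl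

lemma Ffun_mult (s : ℂ) : (Ffun s).IsMultiplicative := by
  constructor
  · show ((μ 1 : ℂ) / (Nat.totient 1 : ℂ) ^ 2) * (Tfun s 1) ^ 2 = 1
    rw [(Tfun_mult s).1]
    simp
  · intro m n h
    show ((μ (m * n) : ℂ) / (Nat.totient (m * n) : ℂ) ^ 2) * (Tfun s (m * n)) ^ 2 = _
    rw [(Tfun_mult s).map_mul_of_coprime h, isMultiplicative_moebius.map_mul_of_coprime h,
      Nat.totient_mul h]
    show _ = ((μ m : ℂ) / (Nat.totient m : ℂ) ^ 2) * (Tfun s m) ^ 2 *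
      (((μ n : ℂ) / (Nat.totient n : ℂ) ^ 2) * (Tfun s n) ^ 2)
    push_cast
    ring

lemma Tfun_prime (s : ℂ) {p : ℕ} (hp : p.Prime) : Tfun s p = 1 - (p : ℂ) ^ (-s) := by
  rw [Tfun_apply, hp.divisors, Finset.sum_pair hp.one_lt.ne]
  rw [moebius_apply_one, moebius_apply_prime hp]
  push_cast
  simp [Complex.one_cpow]
  ring

lemma Ffun_prime (s : ℂ) {p : ℕ} (hp : p.Prime) :
    Ffun s p = -((1 - (p : ℂ) ^ (-s)) ^ 2 / ((p : ℂ) - 1) ^ 2) := by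
  show ((μ p : ℂ) / (Nat.totient p : ℂ) ^ 2) * (Tfun s p) ^ 2 = _
  rw [Tfun_prime s hp, moebius_apply_prime hp, Nat.totient_prime hp,
    Nat.cast_sub hp.one_le]
  push_cast
  ring

lemma Ffun_prime_pow (s : ℂ) {p k : ℕ} (hp : p.Prime) (hk : 2 ≤ k) : Ffun s (p ^ k) = 0 := by
  show ((μ (p ^ k) : ℂ) / (Nat.totient (p ^ k) : ℂ) ^ 2) * (Tfun s (p ^ k)) ^ 2 = 0
  rw [moebius_apply_prime_pow hp (by omega), if_neg (by omega)]
  simp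

lemma norm_Ffun_prime_le (s : ℂ) (hs : 0 ≤ s.re) {p : ℕ} (hp : p.Prime) :
    ‖Ffun s p‖ ≤ 4 / ((p : ℝ) - 1) ^ 2 := by
  have h1 : ‖(p : ℂ) ^ (-s)‖ ≤ 1 := by
    rw [Complex.norm_natCast_cpow_of_pos hp.pos]
    exact Real.rpow_le_one_of_one_le_of_nonpos (by exact_mod_cast hp.one_le)
      (by simpa using hs)
  have h2 : ‖(1 : ℂ) - (p : ℂ) ^ (-s)‖ ≤ 2 := by
    calc ‖(1 : ℂ) - (p : ℂ) ^ (-s)‖ ≤ ‖(1 : ℂ)‖ + ‖(p : ℂ) ^ (-s)‖ := norm_sub_le _ _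
    _ ≤ 2 := by rw [norm_one]; linarith
  have h3 : ‖(p : ℂ) - 1‖ = (p : ℝ) - 1 := by
    rw [show (p : ℂ) - 1 = ((p - 1 : ℕ) : ℂ) by push_cast [Nat.cast_sub hp.one_le]; ring,
      Complex.norm_natCast]
    push_cast [Nat.cast_sub hp.one_le]
    ring
  have hp1 : (0 : ℝ) < (p : ℝ) - 1 := by
    have := hp.two_le
    have : (2 : ℝ) ≤ (p : ℝ) := by exact_mod_cast this
    linarith
  rw [Ffun_prime s hp, norm_neg, norm_div, norm_pow, norm_pow, h3]
  have h4 : ‖(1 : ℂ) - (p : ℂ) ^ (-s)‖ ^ 2 ≤ 4 := by nlinarith [norm_nonneg ((1 : ℂ) - (p : ℂ) ^ (-s))]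
  gcongr

lemma hfun_summable : Summable (fun j : ℕ => 4 / ((j : ℝ) + 1) ^ 2) := by
  have h0 : Summable (fun n : ℕ => 1 / (n : ℝ) ^ 2) :=
    Real.summable_one_div_nat_pow.mpr one_lt_two
  have h1 : Summable (fun n : ℕ => 1 / ((n : ℝ) + 1) ^ 2) := by
    have := (summable_nat_add_iff 1).mpr h0
    refine this.congr fun n => ?_
    push_cast
    ring
  have := h1.mul_left 4
  refine this.congr fun n => ?_
  ring

lemma Ffun_norm_summable (s : ℂ) (hs : 0 ≤ s.re) : Summable (fun n : ℕ => ‖Ffun s n‖) := by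
  set gR : ℕ → ℝ := fun n => ‖Ffun s n‖ with hgR
  have hg1 : gR 1 = 1 := by simp [hgR, (Ffun_mult s).1]
  have hgmul : ∀ {m n : ℕ}, Nat.Coprime m n → gR (m * n) = gR m * gR n := by
    intro m n h
    simp [hgR, (Ffun_mult s).map_mul_of_coprime h]
  have hgsum : ∀ {p : ℕ}, p.Prime → Summable (fun e : ℕ => ‖gR (p ^ e)‖) := by
    intro p hp
    refine summable_of_ne_finset_zero (s := {0, 1}) fun e he => ?_
    have h2 : 2 ≤ e := by
      simp only [Finset.mem_insert, Finset.mem_singleton] at he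
      omega
    simp [hgR, Ffun_prime_pow s hp h2]
  have hhnn : ∀ j : ℕ, 0 ≤ 4 / ((j : ℝ) + 1) ^ 2 := fun j => by positivity
  refine summable_of_sum_le (c := Real.exp (∑' j : ℕ, 4 / ((j : ℝ) + 1) ^ 2))
    (fun n => norm_nonneg _) (fun u => ?_)
  set N : ℕ := u.sup _root_.id + 1 with hN
  have key := EulerProduct.summable_and_hasSum_smoothNumbers_prod_primesBelow_tsum
    (f := gR) hg1 hgmul hgsum N
  have hind : Summable (Set.indicator (Nat.smoothNumbers N) gR) :=
    (summable_subtype_iff_indicator).mp key.1.of_norm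
  have step1 : ∑ n ∈ u, gR n ≤ ∑ n ∈ u, Set.indicator (Nat.smoothNumbers N) gR n := by
    refine Finset.sum_le_sum fun n hn => ?_
    rcases eq_or_ne n 0 with rfl | hn0
    · have : gR 0 = 0 := by simp [hgR]
      rw [this]
      exact Set.indicator_apply_nonneg fun _ => norm_nonneg _
    · rw [Set.indicator_of_mem]
      refine Nat.mem_smoothNumbers.mpr ⟨hn0, fun p hp => ?_⟩
      have h1 : p ∣ n := Nat.dvd_of_mem_primeFactorsList hp
      have h2 : p ≤ n := Nat.le_of_dvd (Nat.pos_of_ne_zero hn0) h1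
      have h3 : n ≤ u.sup _root_.id := Finset.le_sup (f := _root_.id) hn
      omega
  have step2 : ∑ n ∈ u, Set.indicator (Nat.smoothNumbers N) gR n ≤
      ∏ p ∈ N.primesBelow, ∑' e : ℕ, gR (p ^ e) := by
    calc ∑ n ∈ u, Set.indicator (Nat.smoothNumbers N) gR n
        ≤ ∑' n : ℕ, Set.indicator (Nat.smoothNumbers N) gR n :=
          Summable.sum_le_tsum u (fun n _ => Set.indicator_apply_nonneg fun _ => norm_nonneg _) hind
      _ = ∑' m : Nat.smoothNumbers N, gR m := (tsum_subtype _ _).symm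
      _ = ∏ p ∈ N.primesBelow, ∑' e : ℕ, gR (p ^ e) := key.2.tsum_eq
  have step3 : ∏ p ∈ N.primesBelow, ∑' e : ℕ, gR (p ^ e) ≤
      Real.exp (∑' j : ℕ, 4 / ((j : ℝ) + 1) ^ 2) := by
    have heach : ∀ p ∈ N.primesBelow, ∑' e : ℕ, gR (p ^ e) = 1 + gR p := by
      intro p hp
      have hpp := Nat.prime_of_mem_primesBelow hp
      rw [tsum_eq_sum (s := {0, 1}) (fun e he => ?_)]
      · rw [Finset.sum_pair (by norm_num : (0 : ℕ) ≠ 1), pow_zero, pow_one, hg1]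
      · have h2 : 2 ≤ e := by
          simp only [Finset.mem_insert, Finset.mem_singleton] at he
          omega
        simp [hgR, Ffun_prime_pow s hpp h2]
    rw [Finset.prod_congr rfl heach]
    calc ∏ p ∈ N.primesBelow, (1 + gR p)
        ≤ ∏ p ∈ N.primesBelow, Real.exp (gR p) := by
          refine Finset.prod_le_prod (fun p _ => by positivity) fun p _ => ?_
          rw [add_comm]
          exact Real.add_one_le_exp _
      _ = Real.exp (∑ p ∈ N.primesBelow, gR p) := (Real.exp_sum _ _).symm
      _ ≤ Real.exp (∑' j : ℕ, 4 / ((j : ℝ) + 1) ^ 2) := by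
          refine Real.exp_le_exp.mpr ?_
          calc ∑ p ∈ N.primesBelow, gR p
              ≤ ∑ p ∈ N.primesBelow, 4 / (((p - 2 : ℕ) : ℝ) + 1) ^ 2 := by
                refine Finset.sum_le_sum fun p hp => ?_
                have hpp := Nat.prime_of_mem_primesBelow hp
                have : (((p - 2 : ℕ) : ℝ) + 1) = (p : ℝ) - 1 := by
                  have := hpp.two_le
                  push_cast [Nat.cast_sub this]
                  ring
                rw [this]
                exact norm_Ffun_prime_le s hs hpp
            _ = ∑ j ∈ N.primesBelow.image (fun p : ℕ => p - 2), 4 / ((j : ℝ) + 1) ^ 2 := by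
                refine (Finset.sum_image (f := fun j : ℕ => 4 / ((j : ℝ) + 1) ^ 2) (g := fun p : ℕ => p - 2)
                  fun a ha b hb hab => ?_).symm
                have h2a := (Nat.prime_of_mem_primesBelow ha).two_le
                have h2b := (Nat.prime_of_mem_primesBelow hb).two_le
                have hab' : a - 2 = b - 2 := hab
                omega
            _ ≤ ∑' j : ℕ, 4 / ((j : ℝ) + 1) ^ 2 :=
                Summable.sum_le_tsum _ (fun j _ => hhnn j) hfun_summable
  linarith [step1, step2, step3]

/-- For `Re s ≥ 0`, the product `A(s) = ∏_p (1 − (1−p^{−s})²/(p−1)²)` admits the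
absolutely convergent series representation
`A(s) = ∑_n (μ(n)/φ(n)²) ∑_{d,δ|n} μ(d)μ(δ)(dδ)^{−s}`. -/
theorem A_series_representation (s : ℂ) (hs : 0 ≤ s.re) :
    Summable (fun n : ℕ =>
      ‖((μ n : ℂ) / (Nat.totient n : ℂ) ^ 2) *
        ∑ d ∈ n.divisors, ∑ δ ∈ n.divisors,
          (μ d : ℂ) * (μ δ : ℂ) * ((d * δ : ℕ) : ℂ) ^ (-s)‖) ∧
    ∏' p : Nat.Primes, (1 - (1 - (p : ℂ) ^ (-s)) ^ 2 / ((p : ℂ) - 1) ^ 2) =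
      ∑' n : ℕ, ((μ n : ℂ) / (Nat.totient n : ℂ) ^ 2) *
        ∑ d ∈ n.divisors, ∑ δ ∈ n.divisors,
          (μ d : ℂ) * (μ δ : ℂ) * ((d * δ : ℕ) : ℂ) ^ (-s) := by
  have hsum := Ffun_norm_summable s hs
  constructor
  · refine hsum.congr fun n => ?_
    rw [Ffun_apply]
  · have hEP := (Ffun_mult s).eulerProduct_tprod hsum
    have hL : ∏' p : Nat.Primes, (1 - (1 - (p : ℂ) ^ (-s)) ^ 2 / ((p : ℂ) - 1) ^ 2) =
        ∏' p : Nat.Primes, ∑' e : ℕ, Ffun s ((p : ℕ) ^ e) := by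
      refine tprod_congr fun p => ?_
      rw [tsum_eq_sum (s := {0, 1}) (fun e he => ?_)]
      · rw [Finset.sum_pair (by norm_num : (0 : ℕ) ≠ 1), pow_zero, pow_one,
          (Ffun_mult s).1, Ffun_prime s p.prop]
        ring
      · have h2 : 2 ≤ e := by
          simp only [Finset.mem_insert, Finset.mem_singleton] at he
          omega
        exact Ffun_prime_pow s p.prop h2
    rw [hL, hEP]
    exact tsum_congr fun n => Ffun_apply s n
end
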